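/- Define U : ℕ≥1 → ℚ by U(1) = 1, U(2N) = U(N), U(2N+1) = (1/2)U(N+1) + 2U(N) + 1/2. Then for all s ≥ 2 and 0 ≤ p_0 < p_1 < ⋯ < p_s, with k = 2^{p_0} + ⋯ + 2^{p_s}, one has U(k) = 1 + 2^{p_0 - p_1}·[ (2^{2 + p_1 - p_0} - 2)·U(2^{p_1} + ⋯ + 2^{p_s}) - 4·U(2^{p_2} + ⋯ + 2^{p_s}) - 2 ]. -/

import Mathlib

lemma aux_npos (a b : ℕ) (hb : 1 ≤ b) : 1 ≤ 2 ^ a * b :=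
  Nat.one_le_iff_ne_zero.mpr (Nat.mul_ne_zero (Nat.pos_iff_ne_zero.mp (pow_pos (by norm_num) a)) (by omega))

lemma aux_even (U : ℕ → ℚ)
    (heven : ∀ N ≥ 1, U (2 * N) = U N) :
    ∀ n m : ℕ, 1 ≤ m → U (2 ^ n * m) = U m := by
  intro n
  induction n with
  | zero => intro m hm; simp
  | succ n ih =>
    intro m hm
    have h : 2 ^ (n + 1) * m = 2 * (2 ^ n * m) := by ring
    rw [h, heven _ (aux_npos n m hm), ih m hm]

lemma aux_odd (U : ℕ → ℚ)
    (heven : ∀ N ≥ 1, U (2 * N) = U N)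
    (hodd : ∀ N ≥ 1, U (2 * N + 1) = (1 / 2) * U (N + 1) + 2 * U N + 1 / 2) :
    ∀ n m : ℕ, 1 ≤ m → U (2 ^ n * m + 1) =
      (2:ℚ) ^ (-(n:ℤ)) * U (m + 1) + 4 * (1 - (2:ℚ) ^ (-(n:ℤ))) * U m
        + 1 - (2:ℚ) ^ (-(n:ℤ)) := by
  intro n
  induction n with
  | zero => intro m hm; simp
  | succ n ih =>
    intro m hm
    have h : 2 ^ (n + 1) * m + 1 = 2 * (2 ^ n * m) + 1 := by ring
    rw [h, hodd _ (aux_npos n m hm), ih m hm, aux_even U heven n m hm]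
    have hx : (2:ℚ) ^ (-((n:ℤ) + 1)) = (2:ℚ) ^ (-(n:ℤ)) / 2 := by
      rw [neg_add, zpow_add₀ (by norm_num : (2:ℚ) ≠ 0), zpow_neg_one]
      ring
    push_cast
    rw [hx]
    ring

theorem stmt9 (U : ℕ → ℚ) (h1 : U 1 = 1)
    (heven : ∀ N ≥ 1, U (2 * N) = U N)
    (hodd : ∀ N ≥ 1, U (2 * N + 1) = (1 / 2) * U (N + 1) + 2 * U N + 1 / 2)
    (s : ℕ) (hs : 2 ≤ s) (p : ℕ → ℕ) (hp : StrictMonoOn p (Set.Iic s)) :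
    U (∑ i ∈ Finset.range (s + 1), 2 ^ p i) =
      1 + (2 : ℚ) ^ ((p 0 : ℤ) - p 1) *
        (((2 : ℚ) ^ ((2 + p 1 : ℤ) - p 0) - 2) *
            U (∑ i ∈ Finset.Icc 1 s, 2 ^ p i)
          - 4 * U (∑ i ∈ Finset.Icc 2 s, 2 ^ p i) - 2) := by
  have h01 : p 0 < p 1 := hp (by simp) (by simp; omega) (by omega)
  have h12 : p 1 < p 2 := hp (by simp; omega) (by simp; omega) (by omega)
  -- split sums
  have hsplit1 : ∑ i ∈ Finset.range (s + 1), 2 ^ p i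
      = 2 ^ p 0 + ∑ i ∈ Finset.Icc 1 s, 2 ^ p i := by
    rw [Finset.range_eq_Ico, Finset.sum_eq_sum_Ico_succ_bot (by omega),
      Finset.Ico_add_one_right_eq_Icc]
  have hsplit2 : ∑ i ∈ Finset.Icc 1 s, 2 ^ p i
      = 2 ^ p 1 + ∑ i ∈ Finset.Icc 2 s, 2 ^ p i := by
    rw [← Finset.Ico_add_one_right_eq_Icc, Finset.sum_eq_sum_Ico_succ_bot (by omega),
      Finset.Ico_add_one_right_eq_Icc]
  -- factor out 2^(p 2) from the tail sum
  have hdvd : 2 ^ p 2 ∣ ∑ i ∈ Finset.Icc 2 s, 2 ^ p i := by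
    apply Finset.dvd_sum
    intro i hi
    simp only [Finset.mem_Icc] at hi
    exact pow_dvd_pow 2 (hp.monotoneOn (by simp; omega) (by simp; omega) hi.1)
  obtain ⟨T, hT⟩ := hdvd
  have hTpos : 1 ≤ T := by
    rcases Nat.eq_zero_or_pos T with h | h
    · subst h
      simp only [Nat.mul_zero] at hT
      have hpos : (0:ℕ) < ∑ i ∈ Finset.Icc 2 s, 2 ^ p i :=
        Finset.sum_pos (fun i _ => pow_pos (by norm_num) _)
          ⟨2, Finset.mem_Icc.mpr ⟨le_refl 2, hs⟩⟩
      omega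
    · exact h
  set n := p 1 - p 0 with hn
  set e := p 2 - p 1 with he
  have hn1 : 1 ≤ n := by omega
  have he1 : 1 ≤ e := by omega
  set m : ℕ := 2 ^ e * T + 1 with hm
  have hM2 : ∑ i ∈ Finset.Icc 2 s, 2 ^ p i = 2 ^ p 2 * T := hT
  have hM1 : ∑ i ∈ Finset.Icc 1 s, 2 ^ p i = 2 ^ p 1 * m := by
    rw [hsplit2, hT, hm]
    have hpe : p 2 = p 1 + e := by omega
    rw [hpe, pow_add]
    ring
  have hK : ∑ i ∈ Finset.range (s + 1), 2 ^ p i = 2 ^ p 0 * (2 ^ n * m + 1) := by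
    rw [hsplit1, hM1]
    have hpn : p 1 = p 0 + n := by omega
    rw [hpn, pow_add]
    ring
  have hm1 : 1 ≤ m := by omega
  set x : ℚ := (2:ℚ) ^ (-(n:ℤ)) with hx
  have hxne : x ≠ 0 := zpow_ne_zero _ (by norm_num)
  -- U of the whole sum
  have hUK : U (∑ i ∈ Finset.range (s + 1), 2 ^ p i)
      = x * U (m + 1) + 4 * (1 - x) * U m + 1 - x := by
    rw [hK, aux_even U heven (p 0) _ (by omega),
      aux_odd U heven hodd n m hm1]
  -- U m = U M1
  have hUm : U (∑ i ∈ Finset.Icc 1 s, 2 ^ p i) = U m := by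
    rw [hM1, aux_even U heven (p 1) m hm1]
  -- U M2 = U T = U (2^(e-1) * T)
  have hUT : U (∑ i ∈ Finset.Icc 2 s, 2 ^ p i) = U T := by
    rw [hM2, aux_even U heven (p 2) T hTpos]
  have hUT' : U (2 ^ (e - 1) * T) = U T := aux_even U heven (e - 1) T hTpos
  -- U (m + 1)
  have h2e : (2:ℕ) ^ e = 2 * 2 ^ (e - 1) := by
    rw [← pow_succ']
    congr 1
    omega
  have hm'' : m = 2 * (2 ^ (e - 1) * T) + 1 := by
    rw [hm, h2e]; ring
  have hmsucc : m + 1 = 2 * (2 ^ (e - 1) * T + 1) := by omega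
  have hUmsucc : U (m + 1) = U (2 ^ (e - 1) * T + 1) := by
    rw [hmsucc, heven _ (by omega)]
  have hrec : U m = (1/2) * U (2 ^ (e - 1) * T + 1) + 2 * U (2 ^ (e - 1) * T) + 1/2 := by
    rw [hm'']
    exact hodd _ (aux_npos _ _ hTpos)
  have hUm1 : U (m + 1) = 2 * U m - 4 * U T - 1 := by
    rw [hUmsucc, ← hUT', hrec]
    ring
  -- final computation
  rw [hUK, hUm1, hUm, hUT]
  have he1' : ((p 0 : ℤ) - p 1) = -(n:ℤ) := by omega
  have he2' : ((2 + p 1 : ℤ) - p 0) = 2 + (n:ℤ) := by omega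
  rw [he1', he2', ← hx]
  have h3 : (2:ℚ) ^ (2 + (n:ℤ)) = 4 / x := by
    rw [eq_div_iff hxne, hx, ← zpow_add₀ (by norm_num : (2:ℚ) ≠ 0)]
    have : (2:ℤ) + (n:ℤ) + -(n:ℤ) = 2 := by ring
    rw [this]
    norm_num
  rw [h3]
  field_simp
  ring
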